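/- Let G be an invertible symmetric real n×n matrix, N a real n×q matrix with NᵀG⁻¹N invertible, and n⁺ ∈ ℝⁿ a vector such that the augmented matrix N₊ = [N n⁺] (adjoining n⁺ as last column) has N₊ᵀG⁻¹N₊ invertible. Let H = G⁻¹(I − N N*) and H₊ = G⁻¹(I − N₊ N₊*), where P* denotes (PᵀG⁻¹P)⁻¹PᵀG⁻¹. Then H₊ G H = H₊. -/

import Mathlib

open Matrix

/-- `H₊ G H = H₊` where `H` and `H₊` are the projection-type matrices associated with
the active-set matrix `N` and the augmented matrix `N₊ = [N n⁺]`. -/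
theorem stmt_1 {n q : ℕ} (G : Matrix (Fin n) (Fin n) ℝ)
    (hGsym : G.IsSymm) (hG : IsUnit G.det)
    (N : Matrix (Fin n) (Fin q) ℝ) (nplus : Fin n → ℝ)
    (Nplus : Matrix (Fin n) (Fin q ⊕ Unit) ℝ)
    (hNplus : Nplus = Matrix.fromCols N (Matrix.replicateCol Unit nplus))
    (hN : IsUnit (Nᵀ * G⁻¹ * N).det)
    (hNp : IsUnit (Nplusᵀ * G⁻¹ * Nplus).det)
    (H Hplus : Matrix (Fin n) (Fin n) ℝ)
    (hH : H = G⁻¹ * (1 - N * ((Nᵀ * G⁻¹ * N)⁻¹ * Nᵀ * G⁻¹)))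
    (hHplus : Hplus = G⁻¹ * (1 - Nplus * ((Nplusᵀ * G⁻¹ * Nplus)⁻¹ * Nplusᵀ * G⁻¹))) :
    Hplus * G * H = Hplus := by
  have hGG : G * G⁻¹ = 1 := Matrix.mul_nonsing_inv G hG
  set E : Matrix (Fin q ⊕ Unit) (Fin q) ℝ :=
    Matrix.fromRows (1 : Matrix (Fin q) (Fin q) ℝ) (0 : Matrix Unit (Fin q) ℝ) with hEdef
  have hE : Nplus * E = N := by
    rw [hNplus, hEdef, Matrix.fromCols_mul_fromRows]
    simp
  have hMinv : (Nplusᵀ * G⁻¹ * Nplus)⁻¹ * (Nplusᵀ * G⁻¹ * Nplus) = 1 :=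
    Matrix.nonsing_inv_mul _ hNp
  have h1 : (Nplusᵀ * G⁻¹ * Nplus)⁻¹ * Nplusᵀ * G⁻¹ * N = E := by
    have h2 : Nplusᵀ * G⁻¹ * N = (Nplusᵀ * G⁻¹ * Nplus) * E := by
      rw [Matrix.mul_assoc (Nplusᵀ * G⁻¹) Nplus E, hE]
    calc (Nplusᵀ * G⁻¹ * Nplus)⁻¹ * Nplusᵀ * G⁻¹ * N
        = (Nplusᵀ * G⁻¹ * Nplus)⁻¹ * (Nplusᵀ * G⁻¹ * N) := by
          simp only [Matrix.mul_assoc]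
      _ = (Nplusᵀ * G⁻¹ * Nplus)⁻¹ * ((Nplusᵀ * G⁻¹ * Nplus) * E) := by rw [h2]
      _ = E := by rw [← Matrix.mul_assoc, hMinv, Matrix.one_mul]
  have hkey : Nplus * ((Nplusᵀ * G⁻¹ * Nplus)⁻¹ * Nplusᵀ * G⁻¹) * N = N := by
    calc Nplus * ((Nplusᵀ * G⁻¹ * Nplus)⁻¹ * Nplusᵀ * G⁻¹) * N
        = Nplus * ((Nplusᵀ * G⁻¹ * Nplus)⁻¹ * Nplusᵀ * G⁻¹ * N) := by
          simp only [Matrix.mul_assoc]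
      _ = Nplus * E := by rw [h1]
      _ = N := hE
  set A := (Nplusᵀ * G⁻¹ * Nplus)⁻¹ * Nplusᵀ * G⁻¹ with hA
  set B := (Nᵀ * G⁻¹ * N)⁻¹ * Nᵀ * G⁻¹ with hB
  have hXN : (1 - Nplus * A) * N = 0 := by
    rw [Matrix.sub_mul, Matrix.one_mul, hkey, sub_self]
  have hXY : (1 - Nplus * A) * (1 - N * B) = 1 - Nplus * A := by
    rw [Matrix.mul_sub, Matrix.mul_one, ← Matrix.mul_assoc (1 - Nplus * A) N B, hXN, Matrix.zero_mul, sub_zero]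
  rw [hH, hHplus]
  calc G⁻¹ * (1 - Nplus * A) * G * (G⁻¹ * (1 - N * B))
      = G⁻¹ * ((1 - Nplus * A) * ((G * G⁻¹) * (1 - N * B))) := by
        simp only [Matrix.mul_assoc]
    _ = G⁻¹ * (1 - Nplus * A) := by rw [hGG, one_mul, hXY]
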